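/- Let H, V be real inner product spaces with dim V ≥ 2, and suppose a symmetric bilinear map α : (H⊕V) × (H⊕V) → W into a 2-dimensional inner product space W has the type-B₂ normal form: for orthonormal {ξ, ξ̃} in W and unit vectors X₀ ∈ H, e ∈ V, A_ξ Y = ⟨Y,X₀⟩(βX₀+λe), A_ξ V = ⟨V,e⟩(λX₀+γe), A_ξ̃ Y = β̃₀⟨Y,X₀⟩X₀, A_ξ̃ V = b̃V + (γ̃₀ − b̃)⟨V,e⟩e, with λ ≠ 0, βγ − λ² ≠ 0, β̃₀ ≠ 0, b̃ = β̃₀^{-1}δ̃₀ and δ̃₀ = β̃₀γ̃₀ + βγ − λ². Then the relative nullity subspace Δ = {T : α(T,·) = 0} equals {X₀}^⊥ ∩ H if δ̃₀ ≠ 0, and equals ({X₀}^⊥ ∩ H) ⊕ ({e}^⊥ ∩ V) if δ̃₀ = 0. -/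

import Mathlib

open scoped RealInnerProductSpace

/-- Dichotomy for the relative nullity subspace of a type-B₂ immersion
(beginning of the proof of Proposition 3.10): with the second fundamental form
`α(T,u) = ⟨A T,u⟩ξ + ⟨A' T,u⟩ξ̃` in the type-B₂ normal form, the relative
nullity subspace `Δ = {T : α(T,·) = 0}` equals `{X₀}ᗮ ∩ H` when `δ̃₀ ≠ 0`,
and equals `({X₀}ᗮ ∩ H) ⊕ ({e}ᗮ ∩ V)` when `δ̃₀ = 0`. -/
theorem stmt_14 {E W : Type*}
    [NormedAddCommGroup E] [InnerProductSpace ℝ E]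
    [NormedAddCommGroup W] [InnerProductSpace ℝ W]
    (H V : Submodule ℝ E)
    (horth : ∀ x ∈ H, ∀ v ∈ V, ⟪x, v⟫ = 0)
    (hsup : H ⊔ V = ⊤)
    (X₀ : E) (hX₀ : X₀ ∈ H) (hX₀n : ‖X₀‖ = 1)
    (e : E) (he : e ∈ V) (hen : ‖e‖ = 1)
    (ξ ξ' : W) (hξ : ‖ξ‖ = 1) (hξ' : ‖ξ'‖ = 1) (hξξ' : ⟪ξ, ξ'⟫ = 0)
    (β lam γ βt₀ γt₀ bt δt₀ : ℝ)
    (hlam : lam ≠ 0) (hB2 : β * γ - lam ^ 2 ≠ 0) (hβt₀ : βt₀ ≠ 0)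
    (hδt₀ : δt₀ = βt₀ * γt₀ + β * γ - lam ^ 2)
    (hbt : bt = βt₀⁻¹ * δt₀)
    (A A' : E →ₗ[ℝ] E)
    (hAH : ∀ Y ∈ H, A Y = ⟪Y, X₀⟫ • (β • X₀ + lam • e))
    (hAV : ∀ v ∈ V, A v = ⟪v, e⟫ • (lam • X₀ + γ • e))
    (hA'H : ∀ Y ∈ H, A' Y = (βt₀ * ⟪Y, X₀⟫) • X₀)
    (hA'V : ∀ v ∈ V, A' v = bt • v + ((γt₀ - bt) * ⟪v, e⟫) • e) :
    (δt₀ ≠ 0 → ∀ T : E,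
      (∀ u : E, ⟪A T, u⟫ • ξ + ⟪A' T, u⟫ • ξ' = (0 : W)) ↔
      (T ∈ H ∧ ⟪T, X₀⟫ = 0)) ∧
    (δt₀ = 0 → ∀ T : E,
      (∀ u : E, ⟪A T, u⟫ • ξ + ⟪A' T, u⟫ • ξ' = (0 : W)) ↔
      (∃ Y ∈ H, ∃ v ∈ V, ⟪Y, X₀⟫ = 0 ∧ ⟪v, e⟫ = 0 ∧ T = Y + v)) := by
  have hXe : ⟪X₀, e⟫ = 0 := horth X₀ hX₀ e he
  have hXX : ⟪X₀, X₀⟫ = 1 := by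
    rw [real_inner_self_eq_norm_sq, hX₀n]; norm_num
  have hee : ⟪e, e⟫ = 1 := by
    rw [real_inner_self_eq_norm_sq, hen]; norm_num
  have hξξ : ⟪ξ, ξ⟫ = 1 := by
    rw [real_inner_self_eq_norm_sq, hξ]; norm_num
  have hξ'ξ : ⟪ξ', ξ'⟫ = 1 := by
    rw [real_inner_self_eq_norm_sq, hξ']; norm_num
  -- linear independence of (ξ, ξ')
  have indepW : ∀ a b : ℝ, a • ξ + b • ξ' = 0 → a = 0 ∧ b = 0 := by
    intro a b h
    constructor
    · have := congrArg (fun w => ⟪ξ, w⟫) h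
      simp only [inner_add_right, real_inner_smul_right, hξξ, hξξ', inner_zero_right] at this; linarith
    · have := congrArg (fun w => ⟪ξ', w⟫) h
      have h2 : ⟪ξ', ξ⟫ = 0 := by rw [real_inner_comm]; exact hξξ'
      simp only [inner_add_right, real_inner_smul_right, hξ'ξ, h2, inner_zero_right] at this; linarith
  -- linear independence of (X₀, e)
  have indepE : ∀ a b : ℝ, a • X₀ + b • e = 0 → a = 0 ∧ b = 0 := by
    intro a b h
    constructor
    · have := congrArg (fun w => ⟪X₀, w⟫) h
      simp only [inner_add_right, real_inner_smul_right, hXX, hXe, inner_zero_right] at this; linarith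
    · have := congrArg (fun w => ⟪e, w⟫) h
      have h2 : ⟪e, X₀⟫ = 0 := by rw [real_inner_comm]; exact hXe
      simp only [inner_add_right, real_inner_smul_right, hee, h2, inner_zero_right] at this; linarith
  -- the nullity condition is equivalent to A T = 0 ∧ A' T = 0
  have hC : ∀ T : E,
      (∀ u : E, ⟪A T, u⟫ • ξ + ⟪A' T, u⟫ • ξ' = (0 : W)) ↔
      (A T = 0 ∧ A' T = 0) := by
    intro T
    constructor
    · intro h
      constructor
      · have h1 : ⟪A T, A T⟫ = 0 := (indepW _ _ (h (A T))).1
        exact inner_self_eq_zero.mp h1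
      · have h2 : ⟪A' T, A' T⟫ = 0 := (indepW _ _ (h (A' T))).2
        exact inner_self_eq_zero.mp h2
    · rintro ⟨h1, h2⟩ u
      simp [h1, h2]
  constructor
  · -- case δt₀ ≠ 0
    intro hδ T
    rw [hC T]
    constructor
    · rintro ⟨hA0, hA'0⟩
      obtain ⟨Y, hY, v, hv, hT⟩ := Submodule.mem_sup.mp
        (by rw [hsup]; exact Submodule.mem_top : T ∈ H ⊔ V)
      set a := ⟪Y, X₀⟫ with ha_def
      set b := ⟪v, e⟫ with hb_def
      have hAT : A T = (a * β + b * lam) • X₀ + (a * lam + b * γ) • e := by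
        rw [← hT, map_add, hAH Y hY, hAV v hv]
        module
      have hA'T : A' T = (βt₀ * a) • X₀ + (bt • v + ((γt₀ - bt) * b) • e) := by
        rw [← hT, map_add, hA'H Y hY, hA'V v hv]
      rw [hAT] at hA0
      obtain ⟨e1, e2⟩ := indepE _ _ hA0
      have hb : b = 0 := by
        have h3 : (β * γ - lam ^ 2) * b = 0 := by linear_combination β * e2 - lam * e1
        exact (mul_eq_zero.mp h3).resolve_left hB2
      have ha : a = 0 := by
        have h4 : lam * a = 0 := by linear_combination e2 - γ * hb
        exact (mul_eq_zero.mp h4).resolve_left hlam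
      have hbtne : bt ≠ 0 := by
        rw [hbt]; exact mul_ne_zero (inv_ne_zero hβt₀) hδ
      have hv0 : v = 0 := by
        rw [hA'T, ha, hb] at hA'0
        simp only [mul_zero, zero_smul, zero_add, add_zero] at hA'0
        exact (smul_eq_zero.mp hA'0).resolve_left hbtne
      rw [hv0, add_zero] at hT
      subst hT
      exact ⟨hY, ha⟩
    · rintro ⟨hTH, hTX⟩
      constructor
      · rw [hAH T hTH, hTX, zero_smul]
      · rw [hA'H T hTH, hTX, mul_zero, zero_smul]
  · -- case δt₀ = 0
    intro hδ T
    have hbt0 : bt = 0 := by rw [hbt, hδ, mul_zero]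
    rw [hC T]
    constructor
    · rintro ⟨hA0, _⟩
      obtain ⟨Y, hY, v, hv, hT⟩ := Submodule.mem_sup.mp
        (by rw [hsup]; exact Submodule.mem_top : T ∈ H ⊔ V)
      set a := ⟪Y, X₀⟫ with ha_def
      set b := ⟪v, e⟫ with hb_def
      have hAT : A T = (a * β + b * lam) • X₀ + (a * lam + b * γ) • e := by
        rw [← hT, map_add, hAH Y hY, hAV v hv]
        module
      rw [hAT] at hA0
      obtain ⟨e1, e2⟩ := indepE _ _ hA0
      have hb : b = 0 := by
        have h3 : (β * γ - lam ^ 2) * b = 0 := by linear_combination β * e2 - lam * e1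
        exact (mul_eq_zero.mp h3).resolve_left hB2
      have ha : a = 0 := by
        have h4 : lam * a = 0 := by linear_combination e2 - γ * hb
        exact (mul_eq_zero.mp h4).resolve_left hlam
      exact ⟨Y, hY, v, hv, ha, hb, hT.symm⟩
    · rintro ⟨Y, hY, v, hv, ha, hb, rfl⟩
      constructor
      · rw [map_add, hAH Y hY, hAV v hv, ha, hb]
        simp
      · rw [map_add, hA'H Y hY, hA'V v hv, ha, hb, hbt0]
        simp
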